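/- Let x_s ~ N(√(ᾱ^SS_s) x₀, 1-ᾱ^SS_s) independently for s = t,…,T, where ᾱ^SS_s ∈ (0,1) satisfies ∑_{s=t}^T ᾱ^SS_s/(1-ᾱ^SS_s) = ᾱ_t/(1-ᾱ_t) for some ᾱ_t ∈ (0,1). Define G_t = ((1-ᾱ_t)/√(ᾱ_t)) ∑_{s=t}^T √(ᾱ^SS_s) x_s/(1-ᾱ^SS_s). Then G_t ~ N(√(ᾱ_t) x₀, 1-ᾱ_t). -/

import Mathlib

open MeasureTheory ProbabilityTheory Real NNReal

lemma gaussianPDFReal_mul_gaussianPDFReal (μ₁ μ₂ : ℝ) (v₁ v₂ : ℝ≥0) (h₁ : v₁ ≠ 0) (h₂ : v₂ ≠ 0)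
    (x y : ℝ) :
    gaussianPDFReal μ₁ v₁ x * gaussianPDFReal (μ₂ + x) v₂ y =
      gaussianPDFReal (μ₁ + μ₂) (v₁ + v₂) y *
        gaussianPDFReal (μ₁ + (v₁ : ℝ) * (y - μ₁ - μ₂) / ((v₁ : ℝ) + v₂)) (v₁ * v₂ / (v₁ + v₂)) x := by
  have hv₁ : (0:ℝ) < v₁ := lt_of_le_of_ne v₁.coe_nonneg (by exact_mod_cast (Ne.symm h₁))
  have hv₂ : (0:ℝ) < v₂ := lt_of_le_of_ne v₂.coe_nonneg (by exact_mod_cast (Ne.symm h₂))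
  have hs : (0:ℝ) < (v₁:ℝ) + v₂ := by linarith
  have hw : ((v₁ * v₂ / (v₁ + v₂) : ℝ≥0) : ℝ) = (v₁:ℝ) * v₂ / ((v₁:ℝ) + v₂) := by
    push_cast [NNReal.coe_div]
    ring
  simp only [gaussianPDFReal, hw, NNReal.coe_add]
  rw [mul_mul_mul_comm, mul_mul_mul_comm ((√(2 * π * ((v₁:ℝ) + v₂)))⁻¹)]
  congr 1
  · rw [← mul_inv, ← mul_inv, ← Real.sqrt_mul (by positivity), ← Real.sqrt_mul (by positivity)]
    congr 2
    field_simp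
  · rw [← Real.exp_add, ← Real.exp_add]
    congr 1
    field_simp
    ring

lemma measurable_gaussianPDF_uncurry (μ₂ : ℝ) (v₂ : ℝ≥0) :
    Measurable (Function.uncurry fun x y => gaussianPDF (μ₂ + x) v₂ y) := by
  simp only [gaussianPDF, gaussianPDFReal, Function.uncurry]
  fun_prop

lemma gaussianReal_conv (μ₁ μ₂ : ℝ) (v₁ v₂ : ℝ≥0) :
    Measure.map (fun p : ℝ × ℝ => p.1 + p.2)
      ((gaussianReal μ₁ v₁).prod (gaussianReal μ₂ v₂)) = gaussianReal (μ₁ + μ₂) (v₁ + v₂) := by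
  by_cases h₁ : v₁ = 0
  · subst h₁
    rw [gaussianReal_zero_var, Measure.dirac_prod, Measure.map_map measurable_add (by fun_prop)]
    have : ((fun p : ℝ × ℝ => p.1 + p.2) ∘ Prod.mk μ₁) = (μ₁ + ·) := rfl
    rw [this, gaussianReal_map_const_add, add_comm μ₂ μ₁, zero_add]
  by_cases h₂ : v₂ = 0
  · subst h₂
    rw [gaussianReal_zero_var, Measure.prod_dirac, Measure.map_map measurable_add (by fun_prop)]
    have : ((fun p : ℝ × ℝ => p.1 + p.2) ∘ fun x => (x, μ₂)) = (· + μ₂) := rfl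
    rw [this, gaussianReal_map_add_const, add_zero]
  -- main case
  have hs12 : v₁ + v₂ ≠ 0 := by simp [h₁]
  have hw : v₁ * v₂ / (v₁ + v₂) ≠ 0 := by
    rw [div_ne_zero_iff]
    exact ⟨mul_ne_zero h₁ h₂, hs12⟩
  ext s hs
  rw [Measure.map_apply measurable_add hs, Measure.prod_apply (measurable_add hs)]
  have key : ∀ x : ℝ, gaussianReal μ₂ v₂ (Prod.mk x ⁻¹' ((fun p : ℝ × ℝ => p.1 + p.2) ⁻¹' s))
      = ∫⁻ y in s, gaussianPDF (μ₂ + x) v₂ y := by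
    intro x
    have : Prod.mk x ⁻¹' ((fun p : ℝ × ℝ => p.1 + p.2) ⁻¹' s) = (fun y => x + y) ⁻¹' s := rfl
    rw [this, ← Measure.map_apply (measurable_const_add x) hs, gaussianReal_map_const_add,
      gaussianReal_apply _ h₂]
  simp_rw [key]
  rw [gaussianReal_of_var_ne_zero _ h₁,
    lintegral_withDensity_eq_lintegral_mul _ (measurable_gaussianPDF _ _)
      ((measurable_gaussianPDF_uncurry μ₂ v₂).lintegral_prod_right)]
  simp only [Pi.mul_apply]
  have hmul : ∀ x : ℝ, gaussianPDF μ₁ v₁ x * ∫⁻ y in s, gaussianPDF (μ₂ + x) v₂ y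
      = ∫⁻ y in s, gaussianPDF μ₁ v₁ x * gaussianPDF (μ₂ + x) v₂ y := fun x =>
    (lintegral_const_mul _ (measurable_gaussianPDF _ _)).symm
  simp_rw [hmul]
  rw [lintegral_lintegral_swap]
  · have hpt : ∀ y x : ℝ, gaussianPDF μ₁ v₁ x * gaussianPDF (μ₂ + x) v₂ y
        = gaussianPDF (μ₁ + μ₂) (v₁ + v₂) y *
          gaussianPDF (μ₁ + (v₁ : ℝ) * (y - μ₁ - μ₂) / ((v₁ : ℝ) + v₂)) (v₁ * v₂ / (v₁ + v₂)) x := by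
      intro y x
      simp only [gaussianPDF]
      rw [← ENNReal.ofReal_mul (gaussianPDFReal_nonneg _ _ _),
        ← ENNReal.ofReal_mul (gaussianPDFReal_nonneg _ _ _),
        gaussianPDFReal_mul_gaussianPDFReal μ₁ μ₂ v₁ v₂ h₁ h₂ x y]
    simp_rw [hpt]
    have hone : ∀ y : ℝ, ∫⁻ x, gaussianPDF (μ₁ + μ₂) (v₁ + v₂) y *
        gaussianPDF (μ₁ + (v₁ : ℝ) * (y - μ₁ - μ₂) / ((v₁ : ℝ) + v₂)) (v₁ * v₂ / (v₁ + v₂)) x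
        = gaussianPDF (μ₁ + μ₂) (v₁ + v₂) y := by
      intro y
      rw [lintegral_const_mul _ (measurable_gaussianPDF _ _),
        lintegral_gaussianPDF_eq_one _ hw, mul_one]
    simp_rw [hone]
    rw [gaussianReal_apply _ hs12]
  · apply Measurable.aemeasurable
    refine Measurable.mul (f := fun p : ℝ × ℝ => gaussianPDF μ₁ v₁ p.1)
      (g := fun p : ℝ × ℝ => gaussianPDF (μ₂ + p.1) v₂ p.2) ?_ ?_
    · exact (measurable_gaussianPDF _ _).comp measurable_fst
    · exact (measurable_gaussianPDF_uncurry μ₂ v₂).comp (by fun_prop)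

lemma pi_fin_gaussian (n : ℕ) (m : Fin n → ℝ) (v : Fin n → ℝ≥0) :
    Measure.map (fun x : Fin n → ℝ => ∑ i, x i) (Measure.pi fun i => gaussianReal (m i) (v i))
      = gaussianReal (∑ i, m i) (∑ i, v i) := by
  induction n with
  | zero =>
      simp only [Finset.univ_eq_empty, Finset.sum_empty]
      rw [Measure.map_const, measure_univ, one_smul, gaussianReal_zero_var]
  | succ n ih =>
      have hmp := measurePreserving_piFinSuccAbove
        (fun i : Fin (n + 1) => gaussianReal (m i) (v i)) 0
      have hcomp : (fun x : Fin (n + 1) → ℝ => ∑ i, x i)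
          = (fun p : ℝ × (Fin n → ℝ) => p.1 + ∑ j, p.2 j)
            ∘ (MeasurableEquiv.piFinSuccAbove (fun _ => ℝ) 0) := by
        funext x
        exact Fin.sum_univ_succAbove x 0
      rw [hcomp, ← Measure.map_map (by fun_prop) (MeasurableEquiv.measurable _), hmp.map_eq]
      have hg : (fun p : ℝ × (Fin n → ℝ) => p.1 + ∑ j, p.2 j)
          = (fun p : ℝ × ℝ => p.1 + p.2) ∘ Prod.map id (fun y : Fin n → ℝ => ∑ j, y j) := rfl
      rw [hg, ← Measure.map_map measurable_add (by fun_prop),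
        ← Measure.map_prod_map _ _ measurable_id (by fun_prop), Measure.map_id, ih,
        gaussianReal_conv, Fin.sum_univ_succAbove m 0, Fin.sum_univ_succAbove v 0]

lemma pi_gaussian_sum {ι : Type*} [Fintype ι] (m : ι → ℝ) (v : ι → ℝ≥0) :
    Measure.map (fun x : ι → ℝ => ∑ i, x i) (Measure.pi fun i => gaussianReal (m i) (v i))
      = gaussianReal (∑ i, m i) (∑ i, v i) := by
  classical
  let e : Fin (Fintype.card ι) ≃ ι := (Fintype.equivFin ι).symm
  have hmp := measurePreserving_piCongrLeft (fun i => gaussianReal (m i) (v i)) e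
  have hcomp : (fun x : ι → ℝ => ∑ i, x i) ∘ (MeasurableEquiv.piCongrLeft (fun _ => ℝ) e)
      = fun g : Fin (Fintype.card ι) → ℝ => ∑ j, g j := by
    funext g
    simp only [Function.comp_apply, MeasurableEquiv.coe_piCongrLeft]
    have : ∀ i, (Equiv.piCongrLeft (fun _ : ι => ℝ) e) g i = g (e.symm i) := by
      intro i
      rw [Equiv.piCongrLeft_apply_eq_cast]
      exact cast_eq _ _
    simp_rw [this]
    exact Equiv.sum_comp e.symm g
  rw [← hmp.map_eq, Measure.map_map (by fun_prop) (MeasurableEquiv.measurable _), hcomp,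
    pi_fin_gaussian, ← Equiv.sum_comp e m, ← Equiv.sum_comp e v]

lemma pi_gaussian_weighted_sum {ι : Type*} [Fintype ι] (a m : ι → ℝ) (v : ι → ℝ≥0) :
    Measure.map (fun x : ι → ℝ => ∑ i, a i * x i)
        (Measure.pi fun i => gaussianReal (m i) (v i))
      = gaussianReal (∑ i, a i * m i) (∑ i, (⟨(a i) ^ 2, sq_nonneg _⟩ * v i : ℝ≥0)) := by
  have hscale : MeasurePreserving (fun (x : ι → ℝ) i => a i * x i)
      (Measure.pi fun i => gaussianReal (m i) (v i))
      (Measure.pi fun i => gaussianReal (a i * m i) ((⟨(a i) ^ 2, sq_nonneg _⟩ * v i : ℝ≥0))) := by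
    refine measurePreserving_pi _ _ fun i => ⟨by fun_prop, ?_⟩
    exact gaussianReal_map_const_mul (a i)
  have hcomp : (fun x : ι → ℝ => ∑ i, a i * x i)
      = (fun y : ι → ℝ => ∑ i, y i) ∘ (fun (x : ι → ℝ) i => a i * x i) := rfl
  rw [hcomp, ← Measure.map_map (by fun_prop) hscale.measurable, hscale.map_eq, pi_gaussian_sum]


/-- If `x_s ~ N(√ᾱˢˢ_s x₀, 1−ᾱˢˢ_s)` independently for `s = t,…,T` and
`∑_s ᾱˢˢ_s/(1−ᾱˢˢ_s) = ᾱ_t/(1−ᾱ_t)`, then the tail statistic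
`G_t = ((1−ᾱ_t)/√ᾱ_t) ∑_s √ᾱˢˢ_s x_s/(1−ᾱˢˢ_s)` has law `N(√ᾱ_t x₀, 1−ᾱ_t)`. -/
theorem stmt1 (t T : ℕ) (htT : t ≤ T) (x0 : ℝ) (abSS : ℕ → ℝ) (ab : ℝ)
    (hab : ab ∈ Set.Ioo (0 : ℝ) 1)
    (hSS : ∀ s ∈ Finset.Icc t T, abSS s ∈ Set.Ioo (0 : ℝ) 1)
    (hsum : ∑ s ∈ Finset.Icc t T, abSS s / (1 - abSS s) = ab / (1 - ab)) :
    Measure.map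
        (fun x : {s // s ∈ Finset.Icc t T} → ℝ =>
          ((1 - ab) / Real.sqrt ab) *
            ∑ s : {s // s ∈ Finset.Icc t T},
              Real.sqrt (abSS s) * x s / (1 - abSS s))
        (Measure.pi fun s : {s // s ∈ Finset.Icc t T} =>
          gaussianReal (Real.sqrt (abSS s) * x0) (Real.toNNReal (1 - abSS s)))
      = gaussianReal (Real.sqrt ab * x0) (Real.toNNReal (1 - ab)) := by
  obtain ⟨hab0, hab1⟩ := hab
  have hsab : (0:ℝ) < Real.sqrt ab := Real.sqrt_pos.mpr hab0
  set ι := {s // s ∈ Finset.Icc t T}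
  set C : ℝ := (1 - ab) / Real.sqrt ab with hC
  set a : ι → ℝ := fun s => C * Real.sqrt (abSS s) / (1 - abSS s) with ha
  have hfun : (fun x : ι → ℝ => C * ∑ s : ι, Real.sqrt (abSS s) * x s / (1 - abSS s))
      = fun x : ι → ℝ => ∑ s : ι, a s * x s := by
    funext x
    rw [Finset.mul_sum]
    refine Finset.sum_congr rfl fun s _ => ?_
    simp only [ha]
    ring
  rw [hfun, pi_gaussian_weighted_sum]
  have hpos : ∀ s : ι, 0 < abSS s ∧ abSS s < 1 := fun s => hSS s s.2
  have key : ∀ s : ι, abSS ↑s / (1 - abSS ↑s) = Real.sqrt (abSS s) / (1 - abSS s)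
      * Real.sqrt (abSS s) := by
    intro s
    rw [div_mul_eq_mul_div, Real.mul_self_sqrt (hpos s).1.le]
  have hsum' : ∑ s : ι, Real.sqrt (abSS s) / (1 - abSS s) * Real.sqrt (abSS s)
      = ab / (1 - ab) := by
    simp_rw [← key]
    rw [Finset.sum_coe_sort (Finset.Icc t T) (fun s => abSS s / (1 - abSS s))]
    exact hsum
  have hmean : ∑ s : ι, a s * (Real.sqrt (abSS s) * x0) = Real.sqrt ab * x0 := by
    have : ∀ s : ι, a s * (Real.sqrt (abSS s) * x0)
        = C * (Real.sqrt (abSS s) / (1 - abSS s) * Real.sqrt (abSS s)) * x0 := by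
      intro s; simp only [ha]; ring
    simp_rw [this, ← Finset.sum_mul, ← Finset.mul_sum, hsum', hC]
    congr 1
    rw [div_mul_div_comm, mul_comm (1-ab), ← div_mul_div_comm, div_self (by linarith),
      mul_one, Real.div_sqrt]
  have hvar : ∑ s : ι, (⟨(a s) ^ 2, sq_nonneg _⟩ * Real.toNNReal (1 - abSS ↑s) : ℝ≥0)
      = Real.toNNReal (1 - ab) := by
    have h1ab : (0:ℝ) ≤ 1 - ab := by linarith
    refine NNReal.coe_injective ?_
    push_cast
    rw [Real.coe_toNNReal _ h1ab]
    have hterm : ∀ s : ι, (a s) ^ 2 * ((Real.toNNReal (1 - abSS ↑s)) : ℝ)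
        = C ^ 2 * (Real.sqrt (abSS s) / (1 - abSS s) * Real.sqrt (abSS s)) := by
      intro s
      have h1s : (0:ℝ) ≤ 1 - abSS s := by linarith [(hpos s).2]
      have h1s' : (1:ℝ) - abSS s ≠ 0 := by linarith [(hpos s).2]
      rw [Real.coe_toNNReal _ h1s]
      simp only [ha]
      field_simp
    change ∑ i : ι, (a i ^ 2 * ((1 - abSS ↑i).toNNReal : ℝ)) = 1 - ab
    rw [Finset.sum_congr rfl fun s _ => hterm s, ← Finset.mul_sum, hsum', hC,
      div_pow, Real.sq_sqrt hab0.le]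
    have h0 : ab ≠ 0 := ne_of_gt hab0
    have h2 : (1:ℝ) - ab ≠ 0 := by linarith
    field_simp
  rw [hmean, hvar]
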